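/- Let μ be a Lévy measure on ℝⁿ, t ∈ (0,1], 0 < γ < α, ρ_t ≥ 1 with t·q*(ρ_t) = 1, and suppose ∫_1^{ρ_t} q*(r)/r^{1+γ} dr ≤ K q*(ρ_t)/ρ_t^γ and μ{‖u‖ ≥ 1} ≤ M and ρ_t ≤ c t^{−1/α}. Then t ρ_t^γ ∫_{ρ_t‖u‖ ≥ 1} (‖u‖^γ ∧ 1) μ(du) ≤ C for a constant C depending only on γ, K, M, c, α, uniformly in t ∈ (0,1]. -/

import Mathlib

open MeasureTheory Real
open scoped RealInnerProductSpace ENNReal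

set_option maxHeartbeats 1600000 in
/-- Let `μ` be a Lévy measure on `ℝⁿ`, `t ∈ (0,1]`, `0 < γ < α`, `ρ_t ≥ 1`
with `t q*(ρ_t) = 1`, where `q*(r) = sup_{‖l‖=1} ∫ ((r⟪l,u⟫)² ∧ 1) dμ`. If
`∫_1^{ρ_t} q*(r)/r^{1+γ} dr ≤ K q*(ρ_t)/ρ_t^γ`, `μ{‖u‖ ≥ 1} ≤ M` and `ρ_t ≤ c t^{-1/α}`,
then `t ρ_t^γ ∫_{ρ_t‖u‖ ≥ 1} (‖u‖^γ ∧ 1) μ(du) ≤ C` with `C = C(γ,K,M,c,α)` uniform in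
`t ∈ (0,1]`. -/
theorem stmt8 {n : ℕ} (hn : 0 < n) (γ α K M c : ℝ)
    (hγ0 : 0 < γ) (hγα : γ < α) (hα : 0 < α) (hK : 0 < K) (hM : 0 < M) (hc : 0 < c) :
    ∃ C > 0, ∀ (μ : Measure (EuclideanSpace ℝ (Fin n))) (t ρt : ℝ)
      (qstar : ℝ → ℝ),
      μ {0} = 0 →
      (∫⁻ u, ENNReal.ofReal (min (‖u‖ ^ 2) 1) ∂μ) < ∞ →
      (∀ r : ℝ, qstar r = ⨆ l : {l : EuclideanSpace ℝ (Fin n) // ‖l‖ = 1},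
          ∫ u, min ((r * ⟪(l : EuclideanSpace ℝ (Fin n)), u⟫) ^ 2) 1 ∂μ) →
      0 < t → t ≤ 1 → 1 ≤ ρt →
      t * qstar ρt = 1 →
      (∫ r in (1 : ℝ)..ρt, qstar r / r ^ (1 + γ)) ≤ K * qstar ρt / ρt ^ γ →
      μ {u | 1 ≤ ‖u‖} ≤ ENNReal.ofReal M →
      ρt ≤ c * t ^ (-(1 / α)) →
      t * ρt ^ γ * ∫ u in {u | 1 ≤ ρt * ‖u‖}, min (‖u‖ ^ γ) 1 ∂μ ≤ C := by
  classical
  refine ⟨(n : ℝ) * (1 + γ * K) + c ^ γ * M + 1, ?_, ?_⟩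
  · nlinarith [Real.rpow_pos_of_pos hc γ, mul_pos (Real.rpow_pos_of_pos hc γ) hM,
      mul_pos hγ0 hK, Nat.cast_nonneg (α := ℝ) n]
  intro μ t ρt qstar hμ0 hfin hq ht ht1 hρ htq hKint hMb hρc
  have hρ0 : (0:ℝ) < ρt := lt_of_lt_of_le one_pos hρ
  -- integrability of the base function
  have hmin2_meas : Measurable fun u : EuclideanSpace ℝ (Fin n) => min (‖u‖ ^ 2) 1 :=
    (measurable_norm.pow_const 2).min measurable_const
  have hmin2_nn : ∀ u : EuclideanSpace ℝ (Fin n), 0 ≤ min (‖u‖ ^ 2) 1 :=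
    fun u => le_min (by positivity) one_pos.le
  have hInt2 : Integrable (fun u : EuclideanSpace ℝ (Fin n) => min (‖u‖ ^ 2) 1) μ := by
    refine ⟨hmin2_meas.aestronglyMeasurable, ?_⟩
    rw [hasFiniteIntegral_iff_ofReal (ae_of_all _ hmin2_nn)]
    exact hfin
  -- pointwise bound and integrability of the q* integrands
  have hφle : ∀ (r : ℝ) (l : EuclideanSpace ℝ (Fin n)), ‖l‖ = 1 →
      ∀ u, min ((r * ⟪l, u⟫) ^ 2) 1 ≤ max (r ^ 2) 1 * min (‖u‖ ^ 2) 1 := by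
    intro r l hl u
    have hCS : |⟪l, u⟫| ≤ ‖u‖ := by
      have := abs_real_inner_le_norm l u; rwa [hl, one_mul] at this
    have h2 : ⟪l, u⟫ ^ 2 ≤ ‖u‖ ^ 2 := by nlinarith [abs_nonneg ⟪l, u⟫, sq_abs ⟪l, u⟫]
    have h1 : (r * ⟪l, u⟫) ^ 2 ≤ r ^ 2 * ‖u‖ ^ 2 := by nlinarith [sq_nonneg r]
    rcases le_total (‖u‖ ^ 2) 1 with h | h
    · rw [min_eq_left h]
      nlinarith [le_max_left (r ^ 2) 1, min_le_left ((r * ⟪l, u⟫) ^ 2) 1, norm_nonneg u,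
        sq_nonneg ‖u‖]
    · rw [min_eq_right h]
      nlinarith [le_max_right (r ^ 2) 1, min_le_right ((r * ⟪l, u⟫) ^ 2) 1]
  have hφnn : ∀ (r : ℝ) (l u : EuclideanSpace ℝ (Fin n)), 0 ≤ min ((r * ⟪l, u⟫) ^ 2) 1 :=
    fun r l u => le_min (sq_nonneg _) one_pos.le
  have hφmeas : ∀ (r : ℝ) (l : EuclideanSpace ℝ (Fin n)),
      Measurable fun u : EuclideanSpace ℝ (Fin n) => min ((r * ⟪l, u⟫) ^ 2) 1 := fun r l =>
    ((measurable_const.mul (continuous_const.inner continuous_id).measurable).pow_const 2).min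
      measurable_const
  have hφint : ∀ (r : ℝ) (l : {l : EuclideanSpace ℝ (Fin n) // ‖l‖ = 1}),
      Integrable (fun u => min ((r * ⟪(l : EuclideanSpace ℝ (Fin n)), u⟫) ^ 2) 1) μ := by
    intro r l
    refine Integrable.mono' (hInt2.const_mul (max (r ^ 2) 1))
      (hφmeas r l.1).aestronglyMeasurable (ae_of_all _ fun u => ?_)
    rw [Real.norm_eq_abs, abs_of_nonneg (hφnn r l.1 u)]
    exact hφle r l.1 l.2 u
  have hbdd : ∀ r : ℝ, BddAbove (Set.range fun l : {l : EuclideanSpace ℝ (Fin n) // ‖l‖ = 1} =>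
      ∫ u, min ((r * ⟪(l : EuclideanSpace ℝ (Fin n)), u⟫) ^ 2) 1 ∂μ) := by
    intro r
    refine ⟨∫ u, max (r ^ 2) 1 * min (‖u‖ ^ 2) 1 ∂μ, ?_⟩
    rintro x ⟨l, rfl⟩
    exact integral_mono (hφint r l) (hInt2.const_mul _) fun u => hφle r l.1 l.2 u
  have hqnn : ∀ r : ℝ, 0 ≤ qstar r := by
    intro r
    rw [hq r]
    have l : {l : EuclideanSpace ℝ (Fin n) // ‖l‖ = 1} :=
      ⟨EuclideanSpace.single ⟨0, hn⟩ (1 : ℝ), by simp [EuclideanSpace.norm_single]⟩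
    exact le_trans (integral_nonneg fun u => hφnn r l.1 u) (le_ciSup (hbdd r) l)
  have hqmono : ∀ r s : ℝ, 0 ≤ r → r ≤ s → qstar r ≤ qstar s := by
    intro r s hr hrs
    rw [hq r, hq s]
    refine ciSup_mono (hbdd s) fun l => integral_mono (hφint r l) (hφint s l) fun u => ?_
    refine min_le_min ?_ le_rfl
    nlinarith [sq_nonneg ⟪(l : EuclideanSpace ℝ (Fin n)), u⟫,
      mul_le_mul hrs hrs hr (hr.trans hrs)]
  -- tail bound via the n coordinate directions
  have htail : ∀ r : ℝ, 0 < r → μ {u : EuclideanSpace ℝ (Fin n) | 1 ≤ r * ‖u‖} ≤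
      (n : ℝ≥0∞) * ENNReal.ofReal (qstar r) := by
    intro r hr
    have hgi_eq : ∀ i : Fin n, (fun u : EuclideanSpace ℝ (Fin n) => min ((r * u i) ^ 2) 1) =
        fun u => min ((r * ⟪(EuclideanSpace.single i (1:ℝ) : EuclideanSpace ℝ (Fin n)), u⟫) ^ 2) 1 := by
      intro i; funext u; rw [EuclideanSpace.inner_single_left]; norm_num
    set g : EuclideanSpace ℝ (Fin n) → ℝ := fun u => ∑ i : Fin n, min ((r * u i) ^ 2) 1 with hg2
    have hgmeas : Measurable g := by
      refine Finset.measurable_sum _ fun i _ => ?_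
      exact ((measurable_const.mul (EuclideanSpace.proj i : EuclideanSpace ℝ (Fin n) →L[ℝ] ℝ).continuous.measurable).pow_const 2).min measurable_const
    have hgnn : ∀ u, 0 ≤ g u := fun u =>
      Finset.sum_nonneg fun i _ => le_min (sq_nonneg _) one_pos.le
    have hgint : Integrable g μ := by
      refine integrable_finset_sum _ fun i _ => ?_
      rw [hgi_eq i]
      exact hφint r ⟨EuclideanSpace.single i (1:ℝ), by simp [EuclideanSpace.norm_single]⟩
    have hkey : ∀ u ∈ {u : EuclideanSpace ℝ (Fin n) | 1 ≤ r * ‖u‖}, 1 ≤ g u := by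
      intro u hu
      have hu' : 1 ≤ r * ‖u‖ := hu
      have hsum : ∑ i : Fin n, (r * u i) ^ 2 = r ^ 2 * ‖u‖ ^ 2 := by
        rw [EuclideanSpace.norm_eq, Real.sq_sqrt (by positivity), Finset.mul_sum]
        exact Finset.sum_congr rfl fun i _ => by rw [Real.norm_eq_abs, sq_abs]; ring
      have h1 : 1 ≤ r ^ 2 * ‖u‖ ^ 2 := by nlinarith [norm_nonneg u]
      by_cases hcase : ∃ i, 1 ≤ (r * u i) ^ 2
      · obtain ⟨i, hi⟩ := hcase
        calc (1:ℝ) = min ((r * u i) ^ 2) 1 := (min_eq_right hi).symm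
          _ ≤ g u := Finset.single_le_sum (f := fun i => min ((r * u i) ^ 2) 1)
              (fun j _ => le_min (sq_nonneg _) one_pos.le) (Finset.mem_univ i)
      · push_neg at hcase
        have hgu : g u = ∑ i : Fin n, (r * u i) ^ 2 :=
          Finset.sum_congr rfl fun i _ => min_eq_left (hcase i).le
        rw [hgu, hsum]; exact h1
    calc μ {u : EuclideanSpace ℝ (Fin n) | 1 ≤ r * ‖u‖}
        = ∫⁻ _u in {u : EuclideanSpace ℝ (Fin n) | 1 ≤ r * ‖u‖}, 1 ∂μ := (setLIntegral_one _).symm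
      _ ≤ ∫⁻ u in {u : EuclideanSpace ℝ (Fin n) | 1 ≤ r * ‖u‖}, ENNReal.ofReal (g u) ∂μ := by
          refine setLIntegral_mono hgmeas.ennreal_ofReal fun u hu => ?_
          simpa using ENNReal.one_le_ofReal.mpr (hkey u hu)
      _ ≤ ∫⁻ u, ENNReal.ofReal (g u) ∂μ := setLIntegral_le_lintegral _ _
      _ = ENNReal.ofReal (∫ u, g u ∂μ) :=
          (ofReal_integral_eq_lintegral_ofReal hgint (ae_of_all _ hgnn)).symm
      _ ≤ (n : ℝ≥0∞) * ENNReal.ofReal (qstar r) := by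
          rw [hg2]
          rw [integral_finset_sum _ (fun i _ => by
            rw [hgi_eq i]
            exact hφint r ⟨EuclideanSpace.single i (1:ℝ), by simp [EuclideanSpace.norm_single]⟩)]
          calc ENNReal.ofReal (∑ i : Fin n, ∫ u, min ((r * u i) ^ 2) 1 ∂μ)
              ≤ ENNReal.ofReal (∑ _i : Fin n, qstar r) := by
                refine ENNReal.ofReal_le_ofReal (Finset.sum_le_sum fun i _ => ?_)
                rw [hgi_eq i, hq r]
                exact le_ciSup (hbdd r)
                  ⟨EuclideanSpace.single i (1:ℝ), by simp [EuclideanSpace.norm_single]⟩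
            _ = (n : ℝ≥0∞) * ENNReal.ofReal (qstar r) := by
                rw [Finset.sum_const, Finset.card_univ, Fintype.card_fin, nsmul_eq_mul,
                  ENNReal.ofReal_mul (Nat.cast_nonneg n), ENNReal.ofReal_natCast]
  -- finiteness of tails and σ-finiteness
  have htailfin : ∀ ε : ℝ, 0 < ε → μ {u : EuclideanSpace ℝ (Fin n) | ε ≤ ‖u‖} < ∞ := by
    intro ε hε
    have hc₀0 : (0:ℝ≥0∞) < ENNReal.ofReal (min (ε ^ 2) 1) :=
      ENNReal.ofReal_pos.mpr (lt_min (by positivity) one_pos)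
    have hb : ENNReal.ofReal (min (ε ^ 2) 1) * μ {u : EuclideanSpace ℝ (Fin n) | ε ≤ ‖u‖} < ∞ := by
      refine lt_of_le_of_lt ?_ hfin
      calc ENNReal.ofReal (min (ε ^ 2) 1) * μ {u : EuclideanSpace ℝ (Fin n) | ε ≤ ‖u‖}
          = ∫⁻ _u in {u : EuclideanSpace ℝ (Fin n) | ε ≤ ‖u‖}, ENNReal.ofReal (min (ε ^ 2) 1) ∂μ :=
            (setLIntegral_const _ _).symm
        _ ≤ ∫⁻ u in {u : EuclideanSpace ℝ (Fin n) | ε ≤ ‖u‖},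
              ENNReal.ofReal (min (‖u‖ ^ 2) 1) ∂μ := by
            refine setLIntegral_mono hmin2_meas.ennreal_ofReal fun u hu => ?_
            have hu' : ε ≤ ‖u‖ := hu
            exact ENNReal.ofReal_le_ofReal (min_le_min (by nlinarith) le_rfl)
        _ ≤ ∫⁻ u, ENNReal.ofReal (min (‖u‖ ^ 2) 1) ∂μ := setLIntegral_le_lintegral _ _
    by_contra h
    rw [not_lt, top_le_iff] at h
    rw [h, ENNReal.mul_top hc₀0.ne'] at hb
    exact absurd hb (lt_irrefl _)
  haveI hsf : SigmaFinite μ := by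
    refine ⟨⟨⟨fun k => {0} ∪ {u : EuclideanSpace ℝ (Fin n) | 1/(k+1:ℝ) ≤ ‖u‖},
      fun _ => trivial, fun k => ?_, ?_⟩⟩⟩
    · refine lt_of_le_of_lt (measure_union_le _ _) ?_
      rw [hμ0, zero_add]
      exact htailfin _ (by positivity)
    · rw [Set.eq_univ_iff_forall]
      intro u
      rcases eq_or_ne u 0 with rfl | hu
      · exact Set.mem_iUnion.2 ⟨0, Or.inl rfl⟩
      · obtain ⟨k, hk⟩ := exists_nat_one_div_lt (norm_pos_iff.mpr hu)
        exact Set.mem_iUnion.2 ⟨k, Or.inr hk.le⟩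
  -- the layer–cake kernel
  set F : EuclideanSpace ℝ (Fin n) → ℝ → ℝ≥0∞ := fun u r =>
    if 1 ≤ r * ‖u‖ then ENNReal.ofReal (Real.exp (Real.log r * (-1 - γ))) else 0 with hFdef
  have hFmeas : Measurable (Function.uncurry F) := by
    have hset : MeasurableSet {p : EuclideanSpace ℝ (Fin n) × ℝ | 1 ≤ p.2 * ‖p.1‖} :=
      measurableSet_le measurable_const (measurable_snd.mul measurable_fst.norm)
    simp only [hFdef, Function.uncurry]
    exact Measurable.ite hset
      ((Real.measurable_exp.comp ((Real.measurable_log.comp measurable_snd).mul_const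
        (-1 - γ))).ennreal_ofReal) measurable_const
  set g : EuclideanSpace ℝ (Fin n) → ℝ≥0∞ :=
    fun u => ∫⁻ r in Set.Ioc (1:ℝ) ρt, F u r with hgdef
  have hgmeas : Measurable g := by
    simp only [hgdef]
    exact Measurable.lintegral_prod_right' (ν := volume.restrict (Set.Ioc (1:ℝ) ρt)) hFmeas
  -- pointwise layer-cake bound on S₁
  have hgmain : ∀ u : EuclideanSpace ℝ (Fin n), 1 ≤ ρt * ‖u‖ → ‖u‖ < 1 →
      ENNReal.ofReal (‖u‖ ^ γ) ≤ ENNReal.ofReal ((ρt ^ γ)⁻¹) + ENNReal.ofReal γ * g u := by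
    intro u hu1 hu2
    have hu0 : 0 < ‖u‖ := by
      rcases lt_or_ge 0 ‖u‖ with h | h
      · exact h
      · exfalso; nlinarith
    set a : ℝ := ‖u‖⁻¹ with hadef
    have ha0 : 0 < a := inv_pos.mpr hu0
    have hauu : a * ‖u‖ = 1 := inv_mul_cancel₀ hu0.ne'
    have ha1 : 1 < a := by nlinarith
    have haρ : a ≤ ρt := by nlinarith
    have hsub : ∫⁻ r in Set.Ioc a ρt, F u r ≤ g u := by
      simp only [hgdef]
      exact lintegral_mono_set (Set.Ioc_subset_Ioc_left ha1.le)
    have hcong : ∫⁻ r in Set.Ioc a ρt, F u r =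
        ∫⁻ r in Set.Ioc a ρt, ENNReal.ofReal (r ^ (-1 - γ)) := by
      refine setLIntegral_congr_fun measurableSet_Ioc (fun r hr => ?_)
      have hr0 : 0 < r := lt_trans ha0 hr.1
      have h1r : 1 ≤ r * ‖u‖ := by nlinarith [hr.1]
      simp only [hFdef]
      rw [if_pos h1r, ← Real.rpow_def_of_pos hr0]
    have hval : ∫⁻ r in Set.Ioc a ρt, ENNReal.ofReal (r ^ (-1 - γ)) =
        ENNReal.ofReal ((‖u‖ ^ γ - (ρt ^ γ)⁻¹) / γ) := by
      have hint : IntegrableOn (fun r : ℝ => r ^ (-1 - γ)) (Set.Ioc a ρt) := by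
        rw [← intervalIntegrable_iff_integrableOn_Ioc_of_le haρ]
        exact intervalIntegral.intervalIntegrable_rpow (Or.inr (by
          rw [Set.uIcc_of_le haρ]; intro hmem; exact absurd hmem.1 (by linarith)))
      rw [← ofReal_integral_eq_lintegral_ofReal hint ((ae_restrict_iff' measurableSet_Ioc).mpr
        (ae_of_all _ fun r hr => Real.rpow_nonneg (le_of_lt (lt_trans ha0 hr.1)) _))]
      congr 1
      rw [← intervalIntegral.integral_of_le haρ]
      rw [integral_rpow (Or.inr ⟨by intro hcon; nlinarith, by
        rw [Set.uIcc_of_le haρ]; intro hmem; exact absurd hmem.1 (by linarith)⟩)]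
      rw [show (-1 - γ + 1 : ℝ) = -γ by ring]
      rw [div_neg, ← neg_div, neg_sub]
      have e1 : a ^ (-γ) = ‖u‖ ^ γ := by
        rw [hadef, Real.inv_rpow (norm_nonneg u), Real.rpow_neg (norm_nonneg u), inv_inv]
      have e2 : ρt ^ (-γ) = (ρt ^ γ)⁻¹ := Real.rpow_neg hρ0.le γ
      rw [e1, e2]
    have hfinal : ENNReal.ofReal γ * ENNReal.ofReal ((‖u‖ ^ γ - (ρt ^ γ)⁻¹) / γ) =
        ENNReal.ofReal (‖u‖ ^ γ - (ρt ^ γ)⁻¹) := by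
      rw [← ENNReal.ofReal_mul hγ0.le, mul_div_cancel₀ _ hγ0.ne']
    calc ENNReal.ofReal (‖u‖ ^ γ)
        = ENNReal.ofReal ((ρt ^ γ)⁻¹ + (‖u‖ ^ γ - (ρt ^ γ)⁻¹)) := by congr 1; ring
      _ ≤ ENNReal.ofReal ((ρt ^ γ)⁻¹) + ENNReal.ofReal (‖u‖ ^ γ - (ρt ^ γ)⁻¹) :=
          ENNReal.ofReal_add_le
      _ = ENNReal.ofReal ((ρt ^ γ)⁻¹) +
          ENNReal.ofReal γ * ENNReal.ofReal ((‖u‖ ^ γ - (ρt ^ γ)⁻¹) / γ) := by rw [hfinal]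
      _ ≤ ENNReal.ofReal ((ρt ^ γ)⁻¹) + ENNReal.ofReal γ * g u := by
          gcongr
          rw [← hval, ← hcong]
          exact hsub
  -- the monotone surrogate for q* and the r-integral bound
  set Q : ℝ → ℝ := fun r => qstar (max r 0) with hQdef
  have hQmono : Monotone Q := by
    intro x y h
    simp only [hQdef]
    exact hqmono _ _ (le_max_right _ _) (max_le_max h le_rfl)
  have hQmeas : Measurable Q := hQmono.measurable
  set Qd : ℝ → ℝ := fun r => Q r / Real.exp (Real.log r * (1 + γ)) with hQddef
  have hQdmeas : Measurable Qd := by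
    simp only [hQddef]
    exact hQmeas.div (Real.measurable_exp.comp (Real.measurable_log.mul_const _))
  have hQdeq : ∀ r : ℝ, 0 < r → Qd r = qstar r / r ^ (1 + γ) := by
    intro r hr
    simp only [hQddef, hQdef]
    rw [← Real.rpow_def_of_pos hr, max_eq_left hr.le]
  have hswap : ∫⁻ u, g u ∂μ = ∫⁻ r in Set.Ioc (1:ℝ) ρt, ∫⁻ u, F u r ∂μ := by
    simp only [hgdef]
    exact lintegral_lintegral_swap hFmeas.aemeasurable
  have hinner : ∀ r ∈ Set.Ioc (1:ℝ) ρt,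
      ∫⁻ u, F u r ∂μ ≤ (n : ℝ≥0∞) * ENNReal.ofReal (Qd r) := by
    intro r hr
    have hr0 : 0 < r := lt_trans one_pos hr.1
    have hSm : MeasurableSet {u : EuclideanSpace ℝ (Fin n) | 1 ≤ r * ‖u‖} :=
      measurableSet_le measurable_const (measurable_const.mul measurable_norm)
    have heq : ∫⁻ u, F u r ∂μ =
        ENNReal.ofReal (r ^ (-1 - γ)) * μ {u : EuclideanSpace ℝ (Fin n) | 1 ≤ r * ‖u‖} := by
      rw [show (fun u => F u r) = Set.indicator {u : EuclideanSpace ℝ (Fin n) | 1 ≤ r * ‖u‖}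
          (fun _ => ENNReal.ofReal (r ^ (-1 - γ))) from funext fun u => by
        by_cases h : 1 ≤ r * ‖u‖ <;>
          simp [hFdef, Set.indicator_apply, Set.mem_setOf_eq, h, Real.rpow_def_of_pos hr0]]
      rw [lintegral_indicator hSm, setLIntegral_const]
    rw [heq]
    calc ENNReal.ofReal (r ^ (-1 - γ)) * μ {u : EuclideanSpace ℝ (Fin n) | 1 ≤ r * ‖u‖}
        ≤ ENNReal.ofReal (r ^ (-1 - γ)) * ((n : ℝ≥0∞) * ENNReal.ofReal (qstar r)) :=
          mul_le_mul_right (htail r hr0) _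
      _ = (n : ℝ≥0∞) * ENNReal.ofReal (Qd r) := by
          rw [mul_left_comm]
          congr 1
          rw [← ENNReal.ofReal_mul (Real.rpow_nonneg hr0.le _), hQdeq r hr0]
          congr 1
          rw [show (-1 - γ : ℝ) = -(1 + γ) by ring, Real.rpow_neg hr0.le]
          field_simp
  have hr_int : ∫⁻ r in Set.Ioc (1:ℝ) ρt, ∫⁻ u, F u r ∂μ ≤
      (n : ℝ≥0∞) * ENNReal.ofReal (K * qstar ρt / ρt ^ γ) := by
    have hQdnn : ∀ r ∈ Set.Ioc (1:ℝ) ρt, 0 ≤ Qd r := by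
      intro r hr
      have hr0 : 0 < r := lt_trans one_pos hr.1
      rw [hQdeq r hr0]
      exact div_nonneg (hqnn r) (Real.rpow_nonneg hr0.le _)
    have hQdint : IntegrableOn Qd (Set.Ioc (1:ℝ) ρt) := by
      refine Integrable.mono' (g := fun _ => qstar ρt)
        (integrableOn_const (C := qstar ρt) measure_Ioc_lt_top.ne)
        hQdmeas.aestronglyMeasurable
        ((ae_restrict_iff' measurableSet_Ioc).mpr (ae_of_all _ fun r hr => ?_))
      have hr0 : 0 < r := lt_trans one_pos hr.1
      rw [Real.norm_eq_abs, abs_of_nonneg (hQdnn r hr), hQdeq r hr0]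
      calc qstar r / r ^ (1 + γ) ≤ qstar r :=
            div_le_self (hqnn r) (Real.one_le_rpow hr.1.le (by linarith))
        _ ≤ qstar ρt := hqmono r ρt (by linarith [hr.1]) hr.2
    calc ∫⁻ r in Set.Ioc (1:ℝ) ρt, ∫⁻ u, F u r ∂μ
        ≤ ∫⁻ r in Set.Ioc (1:ℝ) ρt, (n : ℝ≥0∞) * ENNReal.ofReal (Qd r) :=
          setLIntegral_mono (measurable_const.mul hQdmeas.ennreal_ofReal) hinner
      _ = (n : ℝ≥0∞) * ∫⁻ r in Set.Ioc (1:ℝ) ρt, ENNReal.ofReal (Qd r) :=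
          lintegral_const_mul _ hQdmeas.ennreal_ofReal
      _ = (n : ℝ≥0∞) * ENNReal.ofReal (∫ r in Set.Ioc (1:ℝ) ρt, Qd r) := by
          rw [ofReal_integral_eq_lintegral_ofReal hQdint
            ((ae_restrict_iff' measurableSet_Ioc).mpr (ae_of_all _ hQdnn))]
      _ ≤ (n : ℝ≥0∞) * ENNReal.ofReal (K * qstar ρt / ρt ^ γ) := by
          refine mul_le_mul_right (ENNReal.ofReal_le_ofReal ?_) _
          rw [← intervalIntegral.integral_of_le hρ]
          calc (∫ r in (1:ℝ)..ρt, Qd r) = ∫ r in (1:ℝ)..ρt, qstar r / r ^ (1 + γ) := by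
                refine intervalIntegral.integral_congr fun r hr => ?_
                rw [Set.uIcc_of_le hρ] at hr
                exact hQdeq r (lt_of_lt_of_le one_pos hr.1)
            _ ≤ K * qstar ρt / ρt ^ γ := hKint
  -- main assembly
  set S : Set (EuclideanSpace ℝ (Fin n)) := {u | 1 ≤ ρt * ‖u‖} with hSdef
  have hSmeas : MeasurableSet S :=
    measurableSet_le measurable_const (measurable_const.mul measurable_norm)
  set S₁ : Set (EuclideanSpace ℝ (Fin n)) :=
    S ∩ {u : EuclideanSpace ℝ (Fin n) | ‖u‖ < 1} with hS1def
  have hS1meas : MeasurableSet S₁ :=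
    hSmeas.inter (measurableSet_lt measurable_norm measurable_const)
  have hfmeas : Measurable fun u : EuclideanSpace ℝ (Fin n) => min (‖u‖ ^ γ) 1 :=
    (((Real.continuous_rpow_const hγ0.le).comp continuous_norm).measurable).min measurable_const
  have hfnn : ∀ u : EuclideanSpace ℝ (Fin n), 0 ≤ min (‖u‖ ^ γ) 1 :=
    fun u => le_min (Real.rpow_nonneg (norm_nonneg u) γ) one_pos.le
  have hJ : ∫ u in S, min (‖u‖ ^ γ) 1 ∂μ =
      (∫⁻ u in S, ENNReal.ofReal (min (‖u‖ ^ γ) 1) ∂μ).toReal :=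
    integral_eq_lintegral_of_nonneg_ae (ae_of_all _ hfnn) hfmeas.aestronglyMeasurable
  have hρtγ : (0:ℝ) < ρt ^ γ := Real.rpow_pos_of_pos hρ0 γ
  have ht1nn : (0:ℝ) ≤ (n:ℝ) * qstar ρt * (ρt ^ γ)⁻¹ :=
    mul_nonneg (mul_nonneg (Nat.cast_nonneg n) (hqnn ρt)) (inv_nonneg.mpr hρtγ.le)
  have ht2nn : (0:ℝ) ≤ γ * ((n:ℝ) * (K * qstar ρt / ρt ^ γ)) :=
    mul_nonneg hγ0.le (mul_nonneg (Nat.cast_nonneg n)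
      (div_nonneg (mul_nonneg hK.le (hqnn ρt)) hρtγ.le))
  set A : ℝ := (n:ℝ) * qstar ρt * (ρt ^ γ)⁻¹ + γ * ((n:ℝ) * (K * qstar ρt / ρt ^ γ)) + M
    with hAdef
  have hAnn : 0 ≤ A := by
    rw [hAdef]; exact add_nonneg (add_nonneg ht1nn ht2nn) hM.le
  have hIbound : ∫⁻ u in S, ENNReal.ofReal (min (‖u‖ ^ γ) 1) ∂μ ≤ ENNReal.ofReal A := by
    have hsplit : ∫⁻ u in S, ENNReal.ofReal (min (‖u‖ ^ γ) 1) ∂μ ≤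
        (∫⁻ u in S₁, ENNReal.ofReal (min (‖u‖ ^ γ) 1) ∂μ) +
        ∫⁻ u in {u : EuclideanSpace ℝ (Fin n) | 1 ≤ ‖u‖},
          ENNReal.ofReal (min (‖u‖ ^ γ) 1) ∂μ := by
      refine le_trans (lintegral_mono_set fun u hu => ?_) (lintegral_union_le _ _ _)
      by_cases h : ‖u‖ < 1
      · exact Or.inl ⟨hu, h⟩
      · exact Or.inr (le_of_not_gt h)
    have hI2 : ∫⁻ u in {u : EuclideanSpace ℝ (Fin n) | 1 ≤ ‖u‖},
        ENNReal.ofReal (min (‖u‖ ^ γ) 1) ∂μ ≤ ENNReal.ofReal M := by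
      calc ∫⁻ u in {u : EuclideanSpace ℝ (Fin n) | 1 ≤ ‖u‖},
            ENNReal.ofReal (min (‖u‖ ^ γ) 1) ∂μ
          ≤ ∫⁻ _u in {u : EuclideanSpace ℝ (Fin n) | 1 ≤ ‖u‖}, 1 ∂μ := by
            refine setLIntegral_mono measurable_const fun u _ => ?_
            calc ENNReal.ofReal (min (‖u‖ ^ γ) 1) ≤ ENNReal.ofReal 1 :=
                ENNReal.ofReal_le_ofReal (min_le_right _ _)
              _ = 1 := ENNReal.ofReal_one
        _ = μ {u : EuclideanSpace ℝ (Fin n) | 1 ≤ ‖u‖} := setLIntegral_one _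
        _ ≤ ENNReal.ofReal M := hMb
    have hI1 : ∫⁻ u in S₁, ENNReal.ofReal (min (‖u‖ ^ γ) 1) ∂μ ≤
        ENNReal.ofReal ((n:ℝ) * qstar ρt * (ρt ^ γ)⁻¹) +
        ENNReal.ofReal (γ * ((n:ℝ) * (K * qstar ρt / ρt ^ γ))) := by
      have e1 : ∫⁻ u in S₁, ENNReal.ofReal (min (‖u‖ ^ γ) 1) ∂μ =
          ∫⁻ u in S₁, ENNReal.ofReal (‖u‖ ^ γ) ∂μ := by
        refine setLIntegral_congr_fun hS1meas (fun u hu => ?_)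
        rw [min_eq_left (Real.rpow_le_one (norm_nonneg u) hu.2.le hγ0.le)]
      rw [e1]
      calc ∫⁻ u in S₁, ENNReal.ofReal (‖u‖ ^ γ) ∂μ
          ≤ ∫⁻ u in S₁, (ENNReal.ofReal ((ρt ^ γ)⁻¹) + ENNReal.ofReal γ * g u) ∂μ :=
            setLIntegral_mono (measurable_const.add (measurable_const.mul hgmeas))
              fun u hu => hgmain u hu.1 hu.2
        _ = ENNReal.ofReal ((ρt ^ γ)⁻¹) * μ S₁ +
            ENNReal.ofReal γ * ∫⁻ u in S₁, g u ∂μ := by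
            rw [lintegral_add_left measurable_const, setLIntegral_const,
              lintegral_const_mul _ hgmeas]
        _ ≤ ENNReal.ofReal ((ρt ^ γ)⁻¹) * ((n:ℝ≥0∞) * ENNReal.ofReal (qstar ρt)) +
            ENNReal.ofReal γ * ((n:ℝ≥0∞) * ENNReal.ofReal (K * qstar ρt / ρt ^ γ)) := by
            refine add_le_add (mul_le_mul_right ?_ _) (mul_le_mul_right ?_ _)
            · exact le_trans (measure_mono Set.inter_subset_left) (htail ρt hρ0)
            · exact le_trans (setLIntegral_le_lintegral _ _)
                (le_trans (le_of_eq hswap) hr_int)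
        _ = ENNReal.ofReal ((n:ℝ) * qstar ρt * (ρt ^ γ)⁻¹) +
            ENNReal.ofReal (γ * ((n:ℝ) * (K * qstar ρt / ρt ^ γ))) := by
            congr 1
            · rw [← ENNReal.ofReal_natCast n,
                ← ENNReal.ofReal_mul (Nat.cast_nonneg n : (0:ℝ) ≤ (n:ℝ)),
                ← ENNReal.ofReal_mul (inv_nonneg.mpr hρtγ.le)]
              congr 1; ring
            · rw [← ENNReal.ofReal_natCast n,
                ← ENNReal.ofReal_mul (Nat.cast_nonneg n : (0:ℝ) ≤ (n:ℝ)),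
                ← ENNReal.ofReal_mul hγ0.le]
    refine le_trans hsplit (le_trans (add_le_add hI1 hI2) (le_of_eq ?_))
    rw [← ENNReal.ofReal_add ht1nn ht2nn, ← ENNReal.ofReal_add (add_nonneg ht1nn ht2nn) hM.le,
      hAdef]
  have hJA : ∫ u in S, min (‖u‖ ^ γ) 1 ∂μ ≤ A := by
    rw [hJ]
    exact ENNReal.toReal_le_of_le_ofReal hAnn hIbound
  have htρ : t * ρt ^ γ ≤ c ^ γ := by
    have h1 : ρt ^ γ ≤ (c * t ^ (-(1/α))) ^ γ := Real.rpow_le_rpow hρ0.le hρc hγ0.le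
    have h2 : (c * t ^ (-(1/α))) ^ γ = c ^ γ * t ^ (-(1/α) * γ) := by
      rw [Real.mul_rpow hc.le (Real.rpow_nonneg ht.le _), ← Real.rpow_mul ht.le]
    have h3 : t * t ^ (-(1/α) * γ) = t ^ (1 + -(1/α) * γ) := by
      rw [Real.rpow_add ht, Real.rpow_one]
    have h4 : t ^ (1 + -(1/α) * γ) ≤ 1 := by
      refine Real.rpow_le_one ht.le ht1 ?_
      have hge : γ / α ≤ 1 := by rw [div_le_one hα]; linarith
      have heq' : -(1/α) * γ = -(γ/α) := by ring
      rw [heq']; linarith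
    calc t * ρt ^ γ ≤ t * (c ^ γ * t ^ (-(1/α) * γ)) := by
          rw [h2] at h1
          exact mul_le_mul_of_nonneg_left h1 ht.le
      _ = c ^ γ * (t * t ^ (-(1/α) * γ)) := by ring
      _ = c ^ γ * t ^ (1 + -(1/α) * γ) := by rw [h3]
      _ ≤ c ^ γ * 1 := mul_le_mul_of_nonneg_left h4 (Real.rpow_nonneg hc.le γ)
      _ = c ^ γ := mul_one _
  have hstep : t * ρt ^ γ * ∫ u in S, min (‖u‖ ^ γ) 1 ∂μ ≤ t * ρt ^ γ * A :=
    mul_le_mul_of_nonneg_left hJA (by positivity)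
  have hAeq : t * ρt ^ γ * A = (n:ℝ) * (t * qstar ρt) + γ * (n:ℝ) * K * (t * qstar ρt) +
      t * ρt ^ γ * M := by
    rw [hAdef]; field_simp
  rw [htq] at hAeq
  have hMle : t * ρt ^ γ * M ≤ c ^ γ * M := mul_le_mul_of_nonneg_right htρ hM.le
  calc t * ρt ^ γ * ∫ u in S, min (‖u‖ ^ γ) 1 ∂μ ≤ t * ρt ^ γ * A := hstep
    _ = (n:ℝ) * 1 + γ * (n:ℝ) * K * 1 + t * ρt ^ γ * M := hAeq
    _ ≤ (n : ℝ) * (1 + γ * K) + c ^ γ * M + 1 := by nlinarith [hMle]
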